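/- Let n be an integer with 0 ≤ n ≤ N_L and let N_coh be a real number satisfying Δ_n ≤ N_coh < Δ_{n+1} (with the conventions Δ_0 = 0 and Δ_{N_L + 1} = +∞). Then the vector p'_opt(2n+1) (the closed-form maximizer of C_sum over Ω(2n+1) from Theorem 1) maximizes the net rate over all valid pilot assignment vectors: C_net(p, N_coh) ≤ C_net(p'_opt(2n+1), N_coh) for every p ∈ P_L; in particular the optimal pilot length is 2n+1 (Theorem 2). -/

import Mathlib

/-- A pilot assignment vector `p = (p_0, …, p_{m-1})` is valid if `0 ≤ p_i ≤ 3^i`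
for every `i` and `Σ_i p_i · 3^{-i} = 1`. -/
def validP {m : ℕ} (p : Fin m → ℤ) : Prop :=
  (∀ i, 0 ≤ p i ∧ p i ≤ 3 ^ (i : ℕ)) ∧
  (∑ i, (p i : ℝ) / 3 ^ (i : ℕ)) = 1

/-- The pilot length `N_pil(p) = Σ_i p_i`. -/
def Npil {m : ℕ} (p : Fin m → ℤ) : ℤ := ∑ i, p i

/-- The per-cell sum rate `C_sum(p) = Σ_i 3^{-i}·p_i·C_i` with `C_i = C_0 + i·d`. -/
noncomputable def Csum {m : ℕ} (C0 d : ℝ) (p : Fin m → ℤ) : ℝ :=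
  ∑ i, (p i : ℝ) / 3 ^ (i : ℕ) * (C0 + (i : ℕ) * d)

/-- `χ(N_p0) = min{k ∈ ℕ : Σ_{i=0}^{k} 3^i > (N_p0 - 1)/2}`. -/
noncomputable def chiN (N : ℤ) : ℕ :=
  sInf {k : ℕ | (N - 1) / 2 < ∑ i ∈ Finset.range (k + 1), (3 : ℤ) ^ i}

/-- The closed-form optimal pilot assignment vector of Theorem 1:
`p'_i = Σ_{s=0}^{i} 3^s - (N-1)/2` if `i = χ(N)`,
`p'_i = 3·((N-1)/2 - Σ_{s=0}^{i-2} 3^s)` if `i = χ(N) + 1 ≤ m-1`,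
and `p'_i = 0` otherwise. -/
noncomputable def popt (m : ℕ) (N : ℤ) : Fin m → ℤ := fun i =>
  if (i : ℕ) = chiN N then (∑ s ∈ Finset.range (chiN N + 1), 3 ^ s) - (N - 1) / 2
  else if (i : ℕ) = chiN N + 1 then
    3 * ((N - 1) / 2 - ∑ s ∈ Finset.range (chiN N), 3 ^ s)
  else 0

/-- The intersection point `Δ_n = 2·(2n - 1 - Σ_{i=0}^{χ(2n-1)-1} 3^i + ξ(n)) + 1`,
where `ξ(n) = 3^{χ(2n-1)}·C_{χ(2n-1)}/d` and `C_i = C_0 + i·d`. -/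
noncomputable def Delta (C0 d : ℝ) (n : ℕ) : ℝ :=
  2 * ((2 * (n : ℝ) - 1) - (∑ i ∈ Finset.range (chiN (2 * (n : ℤ) - 1)), (3 : ℝ) ^ i) +
    3 ^ chiN (2 * (n : ℤ) - 1) * (C0 + (chiN (2 * (n : ℤ) - 1) : ℝ) * d) / d) + 1

/-- The net rate `C_net(p, N_coh) = (1 - N_pil(p)/N_coh)·C_sum(p)`. -/
noncomputable def Cnet {m : ℕ} (C0 d : ℝ) (p : Fin m → ℤ) (Ncoh : ℝ) : ℝ :=
  (1 - (Npil p : ℝ) / Ncoh) * Csum C0 d p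

lemma two_geom (j : ℕ) : 2 * ∑ i ∈ Finset.range j, (3:ℤ)^i = 3^j - 1 := by
  induction j with
  | zero => simp
  | succ j ih => rw [Finset.sum_range_succ, pow_succ]; omega

lemma pow3_ge (t : ℕ) : (2*(t:ℤ)+1) ≤ 3^t := by
  induction t with
  | zero => norm_num
  | succ t ih => push_cast; push_cast at ih; have : (0:ℤ) < 3^t := by positivity
                 calc (2*((t:ℤ)+1)+1) = (2*t+1) + 2 := by ring
                  _ ≤ 3^t + 2 := by linarith
                  _ ≤ 3^t + 2 * 3^t := by linarith
                  _ = 3^(t+1) := by ring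

lemma chi_spec0 (k : ℕ) : (3:ℤ)^(chiN (2*(k:ℤ)+1)) ≤ 2*k+1 ∧ (2*(k:ℤ)+1) < 3^(chiN (2*(k:ℤ)+1) + 1) := by
  have harg : ((2*(k:ℤ)+1) - 1)/2 = k := by omega
  have hmem : ∀ j : ℕ, (j ∈ {j : ℕ | ((2*(k:ℤ)+1) - 1) / 2 < ∑ i ∈ Finset.range (j + 1), (3 : ℤ) ^ i}) ↔ (2*(k:ℤ)+1) < 3^(j+1) := by
    intro j
    have h2 := two_geom (j+1)
    simp only [Set.mem_setOf_eq, harg]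
    omega
  have hne : chiN (2*(k:ℤ)+1) ∈ {j : ℕ | ((2*(k:ℤ)+1) - 1) / 2 < ∑ i ∈ Finset.range (j + 1), (3 : ℤ) ^ i} := by
    apply Nat.sInf_mem
    exact ⟨k, (hmem k).2 (by have := pow3_ge (k+1); push_cast at this ⊢; linarith)⟩
  refine ⟨?_, (hmem _).1 hne⟩
  rcases Nat.eq_zero_or_pos (chiN (2*(k:ℤ)+1)) with h0 | h0
  · rw [h0]; push_cast; omega
  · have hnot := Nat.notMem_of_lt_sInf (show chiN (2*(k:ℤ)+1) - 1 < chiN (2*(k:ℤ)+1) by omega)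
    rw [hmem] at hnot
    push_neg at hnot
    have he : chiN (2*(k:ℤ)+1) - 1 + 1 = chiN (2*(k:ℤ)+1) := by omega
    rwa [he] at hnot

lemma chi_unique {x : ℤ} {a b : ℕ} (ha1 : (3:ℤ)^a ≤ x) (ha2 : x < 3^(a+1))
    (hb1 : (3:ℤ)^b ≤ x) (hb2 : x < 3^(b+1)) : a = b := by
  by_contra h
  rcases Nat.lt_or_ge a b with h' | h'
  · have : (3:ℤ)^(a+1) ≤ 3^b := pow_le_pow_right₀ (by norm_num) (by omega)
    omega
  · have h'' : b < a := by omega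
    have : (3:ℤ)^(b+1) ≤ 3^a := pow_le_pow_right₀ (by norm_num) (by omega)
    omega


noncomputable def cc (k : ℕ) : ℕ := chiN (2*(k:ℤ)+1)

lemma chi_spec (k : ℕ) : (3:ℤ)^(cc k) ≤ 2*k+1 ∧ (2*(k:ℤ)+1) < 3^(cc k + 1) :=
  chi_spec0 k

lemma cc_succ (k : ℕ) : (cc (k+1) = cc k ∧ (2*(k:ℤ)+3) < 3^(cc k+1)) ∨
    (cc (k+1) = cc k + 1 ∧ (3:ℤ)^(cc k + 1) = 2*k+3) := by
  obtain ⟨h1, h2⟩ := chi_spec k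
  obtain ⟨h1', h2'⟩ := chi_spec (k+1)
  push_cast at h1' h2'
  rcases lt_or_ge (2*(k:ℤ)+3) (3^(cc k+1)) with h | h
  · left
    refine ⟨chi_unique h1' h2' (by linarith) (by push_cast; linarith), h⟩
  · right
    have hodd : Odd ((3:ℤ)^(cc k+1)) := Odd.pow ⟨1, by norm_num⟩
    have heq : (3:ℤ)^(cc k+1) = 2*k+3 := by
      rcases hodd with ⟨t, ht⟩; omega
    refine ⟨chi_unique h1' h2' (by linarith) ?_, heq⟩
    rw [pow_succ]
    have : (0:ℤ) < 3^(cc k+1) := by positivity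
    push_cast; linarith [heq]

lemma cc_mono {a b : ℕ} (h : a ≤ b) : cc a ≤ cc b := by
  obtain ⟨h1, _⟩ := chi_spec a
  obtain ⟨_, h2⟩ := chi_spec b
  have hab : (3:ℤ)^(cc a) < 3^(cc b + 1) := by
    calc (3:ℤ)^(cc a) ≤ 2*a+1 := h1
     _ ≤ 2*b+1 := by omega
     _ < _ := h2
  have := (pow_lt_pow_iff_right₀ (by norm_num : (1:ℤ) < 3)).1 hab
  omega


lemma valid_int_sum {m : ℕ} (hm : 1 ≤ m) (p : Fin m → ℤ) (hv : validP p) :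
    ∑ i : Fin m, p i * 3^(m-1-(i:ℕ)) = 3^(m-1) := by
  have hr : (∑ i, (p i : ℝ) * 3^(m-1-(i:ℕ))) = 3^(m-1) := by
    calc ∑ i, (p i:ℝ) * 3^(m-1-(i:ℕ)) = ∑ i, (p i:ℝ)/3^(i:ℕ) * 3^(m-1) := by
          apply Finset.sum_congr rfl; intro i _
          have hi : (i:ℕ) ≤ m-1 := by omega
          have h3 : (3:ℝ)^(m-1) = 3^(i:ℕ) * 3^(m-1-(i:ℕ)) := by
            rw [← pow_add]; congr 1; omega
          have hne : (3:ℝ)^(i:ℕ) ≠ 0 := by positivity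
          field_simp [h3]
          rw [h3]; ring
      _ = (∑ i, (p i:ℝ)/3^(i:ℕ)) * 3^(m-1) := by rw [Finset.sum_mul]
      _ = 3^(m-1) := by rw [hv.2, one_mul]
  exact_mod_cast hr

lemma npil_odd_bounds {m : ℕ} (hm : 1 ≤ m) (p : Fin m → ℤ) (hv : validP p) :
    ∃ k : ℕ, Npil p = 2*(k:ℤ)+1 ∧ (2*(k:ℤ)+1) ≤ 3^(m-1) := by
  have hs := valid_int_sum hm p hv
  have h3 : ∀ j:ℕ, (3:ℤ)^j % 2 = 1 := by
    intro j
    obtain ⟨t, ht⟩ : Odd ((3:ℤ)^j) := Odd.pow ⟨1, by norm_num⟩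
    omega
  have hmod : (∑ i : Fin m, p i * 3^(m-1-(i:ℕ))) % 2 = (∑ i : Fin m, p i) % 2 := by
    rw [Finset.sum_int_mod, Finset.sum_int_mod (f := fun i => p i)]
    congr 1
    apply Finset.sum_congr rfl; intro i _
    rw [Int.mul_emod, h3, mul_one, Int.emod_emod_of_dvd _ (by norm_num)]
  have hodd : Npil p % 2 = 1 := by
    rw [Npil, ← hmod, hs, h3]
  have hnn : 0 ≤ Npil p := Finset.sum_nonneg (fun i _ => (hv.1 i).1)
  have hub : Npil p ≤ 3^(m-1) := by
    rw [← hs, Npil]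
    apply Finset.sum_le_sum; intro i _
    exact le_mul_of_one_le_right (hv.1 i).1 (one_le_pow₀ (by norm_num))
  refine ⟨((Npil p - 1)/2).toNat, ?_, ?_⟩ <;> omega

lemma key_ineq (i χ : ℕ) : (i:ℝ)/3^i ≤ ((χ:ℝ) - 1/2)/3^i + 1/(2*3^χ) := by
  rcases le_or_gt i χ with h | h
  · rcases eq_or_lt_of_le h with h' | h'
    · subst h'
      have hne : (3:ℝ)^i ≠ 0 := by positivity
      have he : ((i:ℝ) - 1/2)/3^i + 1/(2*3^i) = (i:ℝ)/3^i := by field_simp; ring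
      rw [he]
    · have h1 : (i:ℝ)/3^i ≤ ((χ:ℝ)-1/2)/3^i := by
        gcongr
        have : (i:ℝ) + 1 ≤ χ := by exact_mod_cast h'
        linarith
      have h2 : (0:ℝ) < 1/(2*3^χ) := by positivity
      linarith
  · obtain ⟨t, rfl⟩ : ∃ t, i = χ + t := ⟨i - χ, by omega⟩
    have hY : (2*(t:ℝ)+1) ≤ 3^t := by exact_mod_cast pow3_ge t
    rw [pow_add]
    set X := (3:ℝ)^χ with hXdef
    set Y := (3:ℝ)^t with hYdef
    have hX : (0:ℝ) < X := by positivity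
    have hYpos : (0:ℝ) < Y := by positivity
    have key : X*X*Y*(2*t+1) ≤ X*X*Y*Y :=
      mul_le_mul_of_nonneg_left hY (by positivity)
    rw [div_add_div _ _ (by positivity) (by positivity),
      div_le_div_iff₀ (by positivity) (by positivity)]
    push_cast
    nlinarith [key]

lemma csum_decomp {m : ℕ} (C0 d : ℝ) (p : Fin m → ℤ) (hv : validP p) :
    Csum C0 d p = C0 + d * ∑ i, (p i:ℝ) * (i:ℕ) / 3^(i:ℕ) := by
  rw [Csum]
  have : ∀ i : Fin m, (p i:ℝ)/3^(i:ℕ) * (C0 + (i:ℕ)*d)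
      = C0 * ((p i:ℝ)/3^(i:ℕ)) + d * ((p i:ℝ) * (i:ℕ) / 3^(i:ℕ)) := by
    intro i; ring
  rw [Finset.sum_congr rfl (fun i _ => this i), Finset.sum_add_distrib,
    ← Finset.mul_sum, ← Finset.mul_sum, hv.2, mul_one]

lemma f_nonneg {m : ℕ} (p : Fin m → ℤ) (hv : validP p) :
    0 ≤ ∑ i, (p i:ℝ) * (i:ℕ) / 3^(i:ℕ) := by
  apply Finset.sum_nonneg; intro i _
  have : (0:ℝ) ≤ p i := by exact_mod_cast (hv.1 i).1
  positivity

lemma thm1_bound {m : ℕ} (C0 d : ℝ) (hd : 0 ≤ d) (p : Fin m → ℤ) (hv : validP p)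
    (k : ℕ) (hN : Npil p = 2*(k:ℤ)+1) (χ : ℕ) :
    Csum C0 d p ≤ C0 + d * ((χ:ℝ) - 1/2 + (2*(k:ℝ)+1)/(2*3^χ)) := by
  rw [csum_decomp C0 d p hv]
  have hf : ∑ i, (p i:ℝ) * (i:ℕ) / 3^(i:ℕ) ≤ (χ:ℝ) - 1/2 + (2*(k:ℝ)+1)/(2*3^χ) := by
    have step : ∑ i, (p i:ℝ) * (i:ℕ) / 3^(i:ℕ)
        ≤ ∑ i : Fin m, (p i:ℝ) * (((χ:ℝ)-1/2)/3^(i:ℕ) + 1/(2*3^χ)) := by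
      apply Finset.sum_le_sum; intro i _
      have hp : (0:ℝ) ≤ p i := by exact_mod_cast (hv.1 i).1
      have hki := key_ineq (i:ℕ) χ
      calc (p i:ℝ)*(i:ℕ)/3^(i:ℕ) = (p i:ℝ) * ((i:ℕ)/3^(i:ℕ)) := by ring
        _ ≤ (p i:ℝ) * (((χ:ℝ)-1/2)/3^(i:ℕ) + 1/(2*3^χ)) := by
            exact mul_le_mul_of_nonneg_left hki hp
    have e1 : ∑ i : Fin m, (p i:ℝ) * (((χ:ℝ)-1/2)/3^(i:ℕ) + 1/(2*3^χ))
        = ((χ:ℝ)-1/2) * (∑ i, (p i:ℝ)/3^(i:ℕ)) + (∑ i, (p i:ℝ)) * (1/(2*3^χ)) := by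
      rw [Finset.mul_sum, Finset.sum_mul, ← Finset.sum_add_distrib]
      apply Finset.sum_congr rfl; intro i _; ring
    have e2 : (∑ i, (p i:ℝ)) = 2*(k:ℝ)+1 := by
      have : ((Npil p : ℤ):ℝ) = 2*(k:ℝ)+1 := by rw [hN]; push_cast; ring
      rw [← this, Npil]; push_cast; ring
    rw [e1, e2, hv.2] at step
    calc _ ≤ _ := step
      _ = (χ:ℝ) - 1/2 + (2*(k:ℝ)+1)/(2*3^χ) := by ring
  nlinarith [f_nonneg p hv]


lemma sum_two {m : ℕ} {M : Type*} [AddCommMonoid M] (F : Fin m → M) (c : ℕ)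
    (hc : c < m) (hc2 : c + 1 < m)
    (h0 : ∀ i : Fin m, (i:ℕ) ≠ c → (i:ℕ) ≠ c+1 → F i = 0) :
    ∑ i, F i = F ⟨c, hc⟩ + F ⟨c+1, hc2⟩ := by
  rw [← Finset.sum_pair (a := (⟨c, hc⟩ : Fin m)) (b := ⟨c+1, hc2⟩)
    (by intro h; exact absurd (congrArg Fin.val h) (by simp))]
  apply (Finset.sum_subset (Finset.subset_univ _) _).symm
  intro i _ hi
  simp only [Finset.mem_insert, Finset.mem_singleton] at hi
  push_neg at hi
  exact h0 i (fun h => hi.1 (Fin.ext h)) (fun h => hi.2 (Fin.ext h))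

lemma sum_one {m : ℕ} {M : Type*} [AddCommMonoid M] (F : Fin m → M) (c : ℕ)
    (hc : c < m) (hc2 : ¬ (c + 1 < m))
    (h0 : ∀ i : Fin m, (i:ℕ) ≠ c → (i:ℕ) ≠ c+1 → F i = 0) :
    ∑ i, F i = F ⟨c, hc⟩ := by
  apply Finset.sum_eq_single
  · intro b _ hb
    exact h0 b (fun h => hb (Fin.ext h)) (fun h => by omega)
  · intro h; exact absurd (Finset.mem_univ _) h

section
variable {m : ℕ} (k : ℕ)

lemma harg (k : ℕ) : (2*(k:ℤ)+1 - 1)/2 = k := by omega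

lemma popt_eval {m : ℕ} (k : ℕ) (i : Fin m) :
    popt m (2*(k:ℤ)+1) i =
      if (i:ℕ) = cc k then ((∑ s ∈ Finset.range (cc k + 1), (3:ℤ) ^ s) - (k:ℤ))
      else if (i:ℕ) = cc k + 1 then (3 * ((k:ℤ) - ∑ s ∈ Finset.range (cc k), (3:ℤ) ^ s))
      else (0:ℤ) := by
  rw [popt, harg]; rfl

lemma chi_lt (hm : 1 ≤ m) (hk : 2*(k:ℤ)+1 ≤ 3^(m-1)) : cc k < m := by
  have h1 := (chi_spec k).1
  have : (3:ℤ)^(cc k) ≤ 3^(m-1) := le_trans h1 hk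
  have := (pow_le_pow_iff_right₀ (by norm_num : (1:ℤ) < 3)).1 this
  omega

lemma popt_npil (hm : 1 ≤ m) (hk : 2*(k:ℤ)+1 ≤ 3^(m-1)) :
    Npil (popt m (2*(k:ℤ)+1)) = 2*(k:ℤ)+1 := by
  have hc := chi_lt k hm hk
  have hg1 := two_geom (cc k)
  have hg2 := two_geom (cc k + 1)
  have hsucc : ∑ s ∈ Finset.range (cc k + 1), (3:ℤ) ^ s
      = (∑ s ∈ Finset.range (cc k), (3:ℤ) ^ s) + 3^(cc k) := Finset.sum_range_succ _ _
  rw [Npil]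
  by_cases hc2 : cc k + 1 < m
  · rw [sum_two _ (cc k) hc hc2 (by
      intro i h1 h2; rw [popt_eval, if_neg h1, if_neg h2])]
    have hne1 : ¬(cc k + 1 = cc k) := by omega
    simp only [popt_eval, eq_self_iff_true, if_true, if_neg hne1]
    omega
  · have hceq : cc k = m - 1 := by omega
    have h31 : (3:ℤ)^(m-1) ≤ 2*(k:ℤ)+1 := hceq ▸ (chi_spec k).1
    have heq : (2*(k:ℤ)+1) = 3^(cc k) := by rw [hceq]; omega
    rw [sum_one _ (cc k) hc hc2 (by
      intro i h1 h2; rw [popt_eval, if_neg h1, if_neg h2])]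
    simp only [popt_eval, eq_self_iff_true, if_true]
    have h3s : (3:ℤ)^(cc k + 1) = 3 * 3^(cc k) := by rw [pow_succ]; ring
    omega

lemma geom_real (j : ℕ) : ∑ i ∈ Finset.range j, (3:ℝ)^i = ((3:ℝ)^j - 1)/2 := by
  have h := two_geom j
  have : (2:ℝ) * ∑ i ∈ Finset.range j, (3:ℝ)^i = 3^j - 1 := by exact_mod_cast h
  linarith

lemma popt_csum (C0 d : ℝ) (hm : 1 ≤ m) (hk : 2*(k:ℤ)+1 ≤ 3^(m-1)) :
    Csum C0 d (popt m (2*(k:ℤ)+1))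
      = C0 + d * ((cc k : ℝ) - 1/2 + (2*(k:ℝ)+1)/(2*3^(cc k))) := by
  have hc := chi_lt k hm hk
  have hX : (0:ℝ) < 3^(cc k) := by positivity
  rw [Csum]
  by_cases hc2 : cc k + 1 < m
  · rw [sum_two _ (cc k) hc hc2 (by
      intro i h1 h2; rw [popt_eval, if_neg h1, if_neg h2]; simp)]
    have hne1 : ¬(cc k + 1 = cc k) := by omega
    simp only [popt_eval, eq_self_iff_true, if_true, if_neg hne1]
    push_cast
    rw [geom_real, geom_real]
    rw [pow_succ]
    field_simp
    ring
  · have hceq : cc k = m - 1 := by omega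
    have h31 : (3:ℤ)^(m-1) ≤ 2*(k:ℤ)+1 := hceq ▸ (chi_spec k).1
    have heq : (2*(k:ℤ)+1) = 3^(cc k) := by rw [hceq]; omega
    have heqR : (2*(k:ℝ)+1) = 3^(cc k) := by exact_mod_cast heq
    have hg1 := two_geom (cc k)
    have hsucc : ∑ s ∈ Finset.range (cc k + 1), (3:ℤ) ^ s
        = (∑ s ∈ Finset.range (cc k), (3:ℤ) ^ s) + 3^(cc k) := Finset.sum_range_succ _ _
    have ha : ((∑ s ∈ Finset.range (cc k + 1), (3:ℤ) ^ s) - (k:ℤ)) = 2*(k:ℤ)+1 := by omega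
    rw [sum_one _ (cc k) hc hc2 (by
      intro i h1 h2; rw [popt_eval, if_neg h1, if_neg h2]; simp)]
    simp only [popt_eval, eq_self_iff_true, if_true]
    rw [ha]
    push_cast
    rw [heqR]
    field_simp
    ring
end

noncomputable def Hf (C0 d Ncoh : ℝ) (k : ℕ) : ℝ :=
  (1 - (2*(k:ℝ)+1)/Ncoh) * (C0 + d * ((cc k : ℝ) - 1/2 + (2*(k:ℝ)+1)/(2*3^(cc k))))

lemma chi_arg (k : ℕ) : chiN (2*((k+1:ℕ):ℤ) - 1) = cc k := by
  rw [cc]; congr 1; push_cast; ring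

lemma Hstep (C0 d Ncoh : ℝ) (hd : d ≠ 0) (hN : Ncoh ≠ 0) (k : ℕ) :
    Hf C0 d Ncoh (k+1) - Hf C0 d Ncoh k
      = d/(Ncoh*3^(cc k)) * (Ncoh - Delta C0 d (k+1)) := by
  have hX : (3:ℝ)^(cc k) ≠ 0 := by positivity
  rw [Delta, chi_arg, geom_real]
  rcases cc_succ k with ⟨he, _⟩ | ⟨he, h2⟩
  · rw [Hf, Hf, he]
    push_cast
    field_simp
    ring
  · have h2R : (3:ℝ)^(cc k + 1) = 2*(k:ℝ)+3 := by exact_mod_cast h2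
    rw [pow_succ] at h2R
    have hkk : (k:ℝ) = (3^(cc k)*3 - 3)/2 := by linarith
    rw [Hf, Hf, he]
    push_cast
    rw [hkk, pow_succ]
    field_simp
    ring


lemma cc_zero : cc 0 = 0 := by
  have h := (chi_spec 0).1
  by_contra h0
  have : (3:ℤ)^1 ≤ 3^(cc 0) := pow_le_pow_right₀ (by norm_num) (by omega)
  omega

lemma Delta_step_mono {C0 d : ℝ} (hC0 : 0 < C0) (hd : 0 < d) (j : ℕ) :
    Delta C0 d (j+1) ≤ Delta C0 d (j+2) := by
  have h1 : chiN (2*((j+1:ℕ):ℤ) - 1) = cc j := chi_arg j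
  have h2 : chiN (2*((j+2:ℕ):ℤ) - 1) = cc (j+1) := by
    rw [cc]; congr 1; push_cast; ring
  rw [Delta, Delta, h1, h2]
  have hX : (0:ℝ) < 3^(cc j) := by positivity
  rcases cc_succ j with ⟨he, _⟩ | ⟨he, _⟩
  · rw [he]; push_cast; linarith
  · rw [he]
    rw [Finset.sum_range_succ, pow_succ]
    have ha : (0:ℝ) ≤ (cc j : ℝ) := Nat.cast_nonneg _
    have hpos : 0 < 3^(cc j)*C0/d := by positivity
    have key : 2 * ((2 * ((j:ℝ)+2) - 1) - ((∑ i ∈ Finset.range (cc j), (3:ℝ) ^ i) + 3^(cc j)) +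
        3 ^ (cc j) * 3 * (C0 + ((cc j : ℝ)+1) * d) / d) + 1
        - (2 * ((2 * ((j:ℝ)+1) - 1) - (∑ i ∈ Finset.range (cc j), (3:ℝ) ^ i) +
        3 ^ (cc j) * (C0 + (cc j : ℝ) * d) / d) + 1)
        = 4 + 4*(3^(cc j)*C0/d) + 3^(cc j)*(4*(cc j : ℝ)+4) := by
      field_simp
      ring
    push_cast
    nlinarith [key]

lemma Delta_mono {C0 d : ℝ} (hC0 : 0 < C0) (hd : 0 < d) {a b : ℕ} (ha : 1 ≤ a) (hab : a ≤ b) :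
    Delta C0 d a ≤ Delta C0 d b := by
  induction b with
  | zero => omega
  | succ b ih =>
    rcases Nat.lt_or_ge a (b+1) with h | h
    · have hb : 1 ≤ b := by omega
      obtain ⟨j, rfl⟩ : ∃ j, b = j + 1 := ⟨b - 1, by omega⟩
      exact le_trans (ih (by omega)) (Delta_step_mono hC0 hd j)
    · have : a = b + 1 := by omega
      rw [this]

lemma Delta_ge {C0 d : ℝ} (hC0 : 0 < C0) (hd : 0 < d) (j : ℕ) :
    (2*(j:ℝ)+3) ≤ Delta C0 d (j+1) := by
  rw [Delta, chi_arg, geom_real]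
  have hX : (0:ℝ) < 3^(cc j) := by positivity
  have hXle : (3:ℝ)^(cc j) ≤ 2*j+1 := by exact_mod_cast (chi_spec j).1
  have ha : (0:ℝ) ≤ (cc j : ℝ) := Nat.cast_nonneg _
  have key : 2 * ((2 * ((j:ℝ)+1) - 1) - ((3^(cc j) - 1)/2) +
      3 ^ (cc j) * (C0 + (cc j : ℝ) * d) / d) + 1
      = 2*(j:ℝ)+3 + (2*(j:ℝ)+1 - 3^(cc j)) + 2*(3^(cc j)*C0/d) + 2*3^(cc j)*(cc j:ℝ) := by
    field_simp
    ring
  have hpos : 0 < 3^(cc j)*C0/d := by positivity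
  push_cast
  nlinarith [key]


/-- Theorem 2: if `Δ_n ≤ N_coh < Δ_{n+1}` (with the conventions `Δ_0 = 0` and
`Δ_{N_L+1} = +∞`, where `N_L = (3^{m-1}-1)/2`), then `p'_opt(2n+1)` maximizes the
net rate over all valid pilot assignment vectors; in particular the optimal pilot
length is `2n+1`. -/
theorem theorem2_optimal_pilot_length (m : ℕ) (hm : 2 ≤ m)
    (C0 d : ℝ) (hC0 : 0 < C0) (hd : 0 < d)
    (n : ℕ) (hn : n ≤ (3 ^ (m - 1) - 1) / 2)
    (Ncoh : ℝ) (hNcoh : 0 < Ncoh)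
    (hlow : 1 ≤ n → Delta C0 d n ≤ Ncoh)
    (hhigh : n + 1 ≤ (3 ^ (m - 1) - 1) / 2 → Ncoh < Delta C0 d (n + 1)) :
    Npil (popt m (2 * (n : ℤ) + 1)) = 2 * (n : ℤ) + 1 ∧
    ∀ p : Fin m → ℤ, validP p →
      Cnet C0 d p Ncoh ≤ Cnet C0 d (popt m (2 * (n : ℤ) + 1)) Ncoh := by
  have hm1 : 1 ≤ m := by omega
  have h3pos : 0 < 3^(m-1) := Nat.pow_pos (by norm_num)
  have hnn : 2*n ≤ 3^(m-1) - 1 := by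
    have := (Nat.le_div_iff_mul_le (by norm_num : 0 < 2)).1 hn
    omega
  have hk2n : 2*(n:ℤ)+1 ≤ 3^(m-1) := by
    have h : 2*n+1 ≤ 3^(m-1) := by omega
    exact_mod_cast h
  refine ⟨popt_npil n hm1 hk2n, ?_⟩
  intro p hv
  obtain ⟨k, hNk, hkb⟩ := npil_odd_bounds hm1 p hv
  have hkbn : 2*k+1 ≤ 3^(m-1) := by exact_mod_cast hkb
  have hkNL : k ≤ (3^(m-1)-1)/2 := by
    rw [Nat.le_div_iff_mul_le (by norm_num : 0 < 2)]
    omega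
  have hCnetopt : Cnet C0 d (popt m (2*(n:ℤ)+1)) Ncoh = Hf C0 d Ncoh n := by
    rw [Cnet, popt_npil n hm1 hk2n, popt_csum n C0 d hm1 hk2n, Hf]
    push_cast
    ring
  rw [hCnetopt]
  have hdne : d ≠ 0 := ne_of_gt hd
  have hNne : Ncoh ≠ 0 := ne_of_gt hNcoh
  have hstep_up : ∀ i : ℕ, Delta C0 d (i+1) ≤ Ncoh →
      Hf C0 d Ncoh i ≤ Hf C0 d Ncoh (i+1) := by
    intro i hi
    have h := Hstep C0 d Ncoh hdne hNne i
    have hpos : 0 < d/(Ncoh*3^(cc i)) := by positivity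
    nlinarith [h, hpos]
  have hstep_down : ∀ i : ℕ, Ncoh ≤ Delta C0 d (i+1) →
      Hf C0 d Ncoh (i+1) ≤ Hf C0 d Ncoh i := by
    intro i hi
    have h := Hstep C0 d Ncoh hdne hNne i
    have hpos : 0 < d/(Ncoh*3^(cc i)) := by positivity
    nlinarith [h, hpos]
  have hle_n : ∀ j : ℕ, j ≤ n → Hf C0 d Ncoh (n - j) ≤ Hf C0 d Ncoh n := by
    intro j
    induction j with
    | zero => simp
    | succ j ih =>
      intro hj
      have h1 : Hf C0 d Ncoh (n-(j+1)) ≤ Hf C0 d Ncoh (n-(j+1)+1) := by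
        apply hstep_up
        have hD : Delta C0 d (n-(j+1)+1) ≤ Delta C0 d n :=
          Delta_mono hC0 hd (by omega) (by omega)
        have := hlow (by omega)
        linarith
      have e : n - (j+1) + 1 = n - j := by omega
      rw [e] at h1
      exact le_trans h1 (ih (by omega))
  have hge_n : ∀ j : ℕ, n + j ≤ (3^(m-1)-1)/2 → Hf C0 d Ncoh (n + j) ≤ Hf C0 d Ncoh n := by
    intro j
    induction j with
    | zero => simp
    | succ j ih =>
      intro hj
      have h1 : Hf C0 d Ncoh (n+j+1) ≤ Hf C0 d Ncoh (n+j) := by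
        apply hstep_down
        have hD : Delta C0 d (n+1) ≤ Delta C0 d (n+j+1) :=
          Delta_mono hC0 hd (by omega) (by omega)
        have := hhigh (by omega)
        linarith
      have e : n + (j+1) = n+j+1 := rfl
      rw [e]
      exact le_trans h1 (ih (by omega))
  have hHkn : Hf C0 d Ncoh k ≤ Hf C0 d Ncoh n := by
    rcases le_total k n with h | h
    · have := hle_n (n - k) (by omega)
      rwa [show n - (n-k) = k by omega] at this
    · have := hge_n (k - n) (by omega)
      rwa [show n + (k-n) = k by omega] at this
  rcases le_or_gt (2*(k:ℝ)+1) Ncoh with hfac | hfac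
  · have hfacnn : 0 ≤ 1 - (2*(k:ℝ)+1)/Ncoh := by
      rw [sub_nonneg, div_le_one hNcoh]; exact hfac
    have h1 : Cnet C0 d p Ncoh ≤ Hf C0 d Ncoh k := by
      rw [Cnet, hNk, Hf]
      push_cast
      exact mul_le_mul_of_nonneg_left (thm1_bound C0 d (le_of_lt hd) p hv k hNk (cc k)) hfacnn
    linarith
  · have hfneg : 1 - (2*(k:ℝ)+1)/Ncoh < 0 := by
      rw [sub_neg]
      exact (one_lt_div hNcoh).2 hfac
    have hCsum_nn : 0 ≤ Csum C0 d p := by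
      rw [csum_decomp C0 d p hv]
      nlinarith [f_nonneg p hv]
    have hCnetp : Cnet C0 d p Ncoh = (1 - (2*(k:ℝ)+1)/Ncoh) * Csum C0 d p := by
      rw [Cnet, hNk]; push_cast; ring
    rcases le_or_gt (2*(n:ℝ)+1) Ncoh with hn1 | hn2
    · have h0 : Cnet C0 d p Ncoh ≤ 0 := by
        rw [hCnetp]
        exact mul_nonpos_of_nonpos_of_nonneg (le_of_lt hfneg) hCsum_nn
      have hHn : 0 ≤ Hf C0 d Ncoh n := by
        rw [Hf]
        apply mul_nonneg
        · rw [sub_nonneg, div_le_one hNcoh]; exact hn1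
        · have hXle : (3:ℝ)^(cc n) ≤ 2*n+1 := by exact_mod_cast (chi_spec n).1
          have hX : (0:ℝ) < 3^(cc n) := by positivity
          have hhalf : (1:ℝ)/2 ≤ (2*(n:ℝ)+1)/(2*3^(cc n)) := by
            rw [div_le_div_iff₀ (by norm_num) (by positivity)]
            nlinarith
          have hc0 : (0:ℝ) ≤ (cc n:ℝ) := Nat.cast_nonneg _
          nlinarith
      linarith
    · have hn0 : n = 0 := by
        by_contra h
        obtain ⟨j, rfl⟩ : ∃ j, n = j+1 := ⟨n-1, by omega⟩
        have h1 := Delta_ge hC0 hd j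
        have h2 := hlow (by omega)
        push_cast at hn2
        linarith
      subst hn0
      have hNc1 : Ncoh < 1 := by norm_num at hn2; linarith
      have hHf0 : Hf C0 d Ncoh 0 = (1 - 1/Ncoh)*C0 := by
        rw [Hf, cc_zero]; norm_num
      rw [hHf0]
      have hCge : C0 ≤ Csum C0 d p := by
        rw [csum_decomp C0 d p hv]
        nlinarith [f_nonneg p hv]
      have hkcast : (1:ℝ) ≤ 2*(k:ℝ)+1 := by
        have : (0:ℝ) ≤ (k:ℝ) := Nat.cast_nonneg _
        linarith
      calc Cnet C0 d p Ncoh = (1 - (2*(k:ℝ)+1)/Ncoh) * Csum C0 d p := hCnetp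
        _ ≤ (1 - (2*(k:ℝ)+1)/Ncoh) * C0 := mul_le_mul_of_nonpos_left hCge (le_of_lt hfneg)
        _ ≤ (1 - 1/Ncoh) * C0 := by
            apply mul_le_mul_of_nonneg_right _ (le_of_lt hC0)
            have hdiv : (1:ℝ)/Ncoh ≤ (2*(k:ℝ)+1)/Ncoh := by gcongr
            linarith
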